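/- Let {Π_j}_{j=0}^{d²-1} be a minimal IC POVM on ℂ^d, and suppose the structure constants C_{jkl} defined by [Π_j, Π_k] = Σ_l C_{jkl} Π_l are completely antisymmetric. Then all Π_j have trace 1/d and {Π_j} is a generalized SIC measurement. -/

import Mathlib

open Matrix ComplexOrder

noncomputable section

abbrev Mat (d : ℕ) := Matrix (Fin d) (Fin d) ℂ

lemma sum_diag_stdBasisMatrix (d : ℕ) :
    (∑ k : Fin d, single k k (1 : ℂ)) = 1 := by
  ext i j
  rw [Matrix.sum_apply]
  by_cases h : i = j
  · subst h
    simp [Matrix.single, Matrix.one_apply, Finset.sum_ite_eq]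
  · simp only [Matrix.single, Matrix.one_apply, of_apply, h, if_false]
    refine Finset.sum_eq_zero fun k _ => ?_
    rw [if_neg]
    rintro ⟨rfl, rfl⟩
    exact h rfl

lemma schur_ad_comm {d : ℕ} (hd : 2 ≤ d) (T : Mat d →ₗ[ℂ] Mat d)
    (h : ∀ A X : Mat d, T (A * X - X * A) = A * T X - T X * A) :
    ∃ a b : ℂ, ∀ X, T X = a • X + (b * Matrix.trace X) • (1 : Mat d) := by
  classical
  set E : Fin d → Fin d → Mat d := fun i j => single i j 1 with hE
  have hd0 : (d : ℂ) ≠ 0 := by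
    have : 0 < d := by omega
    exact_mod_cast this.ne'
  -- T 1 is scalar
  have h1 : ∀ A : Mat d, A * T 1 = T 1 * A := by
    intro A
    have h0 := h A 1
    simp only [mul_one, one_mul, sub_self, map_zero] at h0
    exact sub_eq_zero.mp h0.symm
  obtain ⟨lam, hlam⟩ : ∃ lam : ℂ, T 1 = lam • (1 : Mat d) := by
    obtain ⟨r, hr⟩ := mem_range_scalar_of_commute_single
      (M := T 1) (fun i j _ => h1 (single i j 1))
    refine ⟨r, ?_⟩
    rw [← hr]
    ext i j
    by_cases hij : i = j <;>
      simp [Matrix.scalar_apply, Matrix.diagonal_apply, Matrix.one_apply, hij]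
  -- off-diagonal eigenvectors
  have hoff : ∀ j k : Fin d, j ≠ k → T (E j k) = (T (E j k) j k) • E j k := by
    intro j k hjk
    set M := T (E j k) with hM
    have e1 : M = E j j * M - M * E j j := by
      have hcomm : E j j * E j k - E j k * E j j = E j k := by
        simp only [hE]
        rw [single_mul_single_same, single_mul_single_of_ne (h := hjk.symm), one_mul, sub_zero]
      calc M = T (E j k) := rfl
        _ = T (E j j * E j k - E j k * E j j) := by rw [hcomm]
        _ = E j j * M - M * E j j := h _ _
    have e2 : M = M * E k k - E k k * M := by
      have hcomm : E k k * E j k - E j k * E k k = -(E j k) := by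
        simp only [hE]
        rw [single_mul_single_of_ne (h := hjk.symm), single_mul_single_same, one_mul, zero_sub]
      have h2 := h (E k k) (E j k)
      rw [hcomm, map_neg] at h2
      have h3 : M = -(E k k * M - M * E k k) := neg_eq_iff_eq_neg.mp h2
      rw [neg_sub] at h3
      exact h3
    have f1 : ∀ p q, M p q = (if p = j then M j q else 0) - (if q = j then M p j else 0) := by
      intro p q
      have h0 : M p q = (E j j * M) p q - (M * E j j) p q := by
        rw [← Matrix.sub_apply, ← e1]
      have hL : (E j j * M) p q = if p = j then M j q else 0 := by
        by_cases hp : p = j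
        · subst hp
          rw [if_pos rfl]
          simp only [hE]
          rw [single_mul_apply_same, one_mul]
        · rw [if_neg hp]
          simp only [hE]
          rw [single_mul_apply_of_ne (h := hp)]
      have hR : (M * E j j) p q = if q = j then M p j else 0 := by
        by_cases hq : q = j
        · subst hq
          rw [if_pos rfl]
          simp only [hE]
          rw [mul_single_apply_same, mul_one]
        · rw [if_neg hq]
          simp only [hE]
          rw [mul_single_apply_of_ne (hbj := hq)]
      rw [h0, hL, hR]
    have f2 : ∀ p q, M p q = (if q = k then M p k else 0) - (if p = k then M k q else 0) := by
      intro p q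
      have h0 : M p q = (M * E k k) p q - (E k k * M) p q := by
        rw [← Matrix.sub_apply, ← e2]
      have hL : (M * E k k) p q = if q = k then M p k else 0 := by
        by_cases hq : q = k
        · subst hq
          rw [if_pos rfl]
          simp only [hE]
          rw [mul_single_apply_same, mul_one]
        · rw [if_neg hq]
          simp only [hE]
          rw [mul_single_apply_of_ne (hbj := hq)]
      have hR : (E k k * M) p q = if p = k then M k q else 0 := by
        by_cases hp : p = k
        · subst hp
          rw [if_pos rfl]
          simp only [hE]
          rw [single_mul_apply_same, one_mul]
        · rw [if_neg hp]
          simp only [hE]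
          rw [single_mul_apply_of_ne (h := hp)]
      rw [h0, hL, hR]
    ext p q
    rw [Matrix.smul_apply]
    by_cases hp : p = j
    · by_cases hq : q = k
      · have hEq : E j k p q = 1 := by
          simp only [hE]
          rw [hp, hq]
          exact single_apply_same _ _ _
        rw [hEq, smul_eq_mul, mul_one, hp, hq]
      · have hEq : E j k p q = 0 := by
          simp only [hE]
          exact single_apply_of_ne _ _ _ _ _ (fun hcon => hq hcon.2.symm)
        rw [hEq, smul_eq_mul, mul_zero]
        have h2 := f2 p q
        rw [if_neg hq, if_neg (fun hcon => hjk (by rw [← hp, hcon]))] at h2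
        simpa using h2
    · have hEq : E j k p q = 0 := by
        simp only [hE]
        exact single_apply_of_ne _ _ _ _ _ (fun hcon => hp hcon.1.symm)
      rw [hEq, smul_eq_mul, mul_zero]
      have h1' := f1 p q
      rw [if_neg hp] at h1'
      by_cases hq : q = j
      · rw [hq, if_pos rfl, zero_sub] at h1'
        rw [hq]
        linear_combination h1' / 2
      · rw [if_neg hq] at h1'; simpa using h1'
  set c : Fin d → Fin d → ℂ := fun j k => T (E j k) j k with hc
  have hgen : ∀ j k : Fin d, j ≠ k → T (E j j - E k k) = c k j • (E j j - E k k) := by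
    intro j k hjk
    have hcomm : E j k * E k j - E k j * E j k = E j j - E k k := by
      simp only [hE]
      rw [single_mul_single_same, single_mul_single_same]
      norm_num
    calc T (E j j - E k k) = T (E j k * E k j - E k j * E j k) := by rw [hcomm]
      _ = E j k * T (E k j) - T (E k j) * E j k := h _ _
      _ = E j k * (c k j • E k j) - (c k j • E k j) * E j k := by
          rw [hoff k j hjk.symm]
      _ = c k j • (E j j - E k k) := by
          rw [mul_smul_comm, smul_mul_assoc, ← smul_sub, hcomm]
  have entry : ∀ (j k : Fin d), j ≠ k → ∀ (x y : ℂ),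
      x • (E j j - E k k) = y • (E j j - E k k) → x = y := by
    intro j k hjk x y hxy
    have e1 : E j j j j = (1 : ℂ) := by
      simp only [hE]; exact single_apply_same _ _ _
    have e2 : E k k j j = (0 : ℂ) := by
      simp only [hE]
      exact single_apply_of_ne _ _ _ _ _ (fun hcon => hjk hcon.1.symm)
    have h0 : (x • (E j j - E k k)) j j = (y • (E j j - E k k)) j j := by rw [hxy]
    simp only [Matrix.smul_apply, Matrix.sub_apply, e1, e2, smul_eq_mul] at h0
    simpa using h0
  have hsym : ∀ j k, j ≠ k → c j k = c k j := by
    intro j k hjk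
    have hg1 := hgen j k hjk
    have hg2 := hgen k j hjk.symm
    have hg2' : T (E j j - E k k) = c j k • (E j j - E k k) := by
      calc T (E j j - E k k) = -T (E k k - E j j) := by rw [← map_neg, neg_sub]
        _ = -(c j k • (E k k - E j j)) := by rw [hg2]
        _ = c j k • (E j j - E k k) := by rw [← smul_neg, neg_sub]
    exact (entry j k hjk _ _ (hg1.symm.trans hg2')).symm
  have hleft : ∀ j k l : Fin d, j ≠ k → k ≠ l → j ≠ l → c j l = c k l := by
    intro j k l hjk hkl hjl
    have hcomm : E j k * E k l - E k l * E j k = E j l := by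
      simp only [hE]
      rw [single_mul_single_same, single_mul_single_of_ne (h := Ne.symm hjl), one_mul, sub_zero]
    have hT1 : T (E j l) = c k l • E j l := by
      calc T (E j l) = T (E j k * E k l - E k l * E j k) := by rw [hcomm]
        _ = E j k * T (E k l) - T (E k l) * E j k := h _ _
        _ = E j k * (c k l • E k l) - (c k l • E k l) * E j k := by rw [hoff k l hkl]
        _ = c k l • E j l := by rw [mul_smul_comm, smul_mul_assoc, ← smul_sub, hcomm]
    have hT2 : T (E j l) = c j l • E j l := hoff j l hjl
    have e1 : E j l j l = (1 : ℂ) := by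
      simp only [hE]; exact single_apply_same _ _ _
    have h0 : (c j l • E j l) j l = (c k l • E j l) j l := by rw [← hT2, ← hT1]
    rw [Matrix.smul_apply, Matrix.smul_apply, e1] at h0
    simpa using h0
  -- all off-diagonal constants are equal
  obtain ⟨z0, z1, hz⟩ : ∃ z0 z1 : Fin d, z0 ≠ z1 :=
    ⟨⟨0, by omega⟩, ⟨1, by omega⟩, by simp [Fin.ext_iff]⟩
  set a := c z0 z1 with ha
  have hcall : ∀ j k, j ≠ k → c j k = a := by
    intro j k hjk
    rcases eq_or_ne k z1 with hk1 | hk1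
    · rcases eq_or_ne j z0 with hj0 | hj0
      · rw [hj0, hk1]
      · rw [hk1]
        rw [hk1] at hjk
        exact hleft j z0 z1 hj0 hz hjk
    · rcases eq_or_ne j z1 with hj1 | hj1
      · rw [hsym j k hjk, hj1]
        rcases eq_or_ne k z0 with hk0 | hk0
        · rw [hk0]
        · exact hleft k z0 z1 hk0 hz hk1
      · have hstep : c j k = c z1 k := hleft j z1 k hj1 (Ne.symm hk1) hjk
        rw [hstep, hsym z1 k (Ne.symm hk1)]
        rcases eq_or_ne k z0 with hk0 | hk0
        · rw [hk0]
        · exact hleft k z0 z1 hk0 hz hk1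
  have hterm : ∀ (j k : Fin d), T (E j j - E k k) = a • (E j j - E k k) := by
    intro j k
    by_cases hjk : j = k
    · subst hjk; simp
    · rw [hgen j k hjk, hcall k j (Ne.symm hjk)]
  have hdiag : ∀ j, T (E j j) = a • E j j + ((lam - a) / d) • 1 := by
    intro j
    have hsumE : (∑ k : Fin d, (E j j - E k k)) = (d : ℂ) • E j j - 1 := by
      rw [Finset.sum_sub_distrib]
      simp only [hE]
      rw [sum_diag_stdBasisMatrix, Finset.sum_const, Finset.card_univ, Fintype.card_fin]
      congr 1
      exact (Nat.cast_smul_eq_nsmul ℂ d _).symm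
    have hTs : T ((d : ℂ) • E j j - 1) = a • ((d : ℂ) • E j j - 1) := by
      rw [← hsumE, map_sum, Finset.smul_sum]
      exact Finset.sum_congr rfl fun k _ => hterm j k
    rw [map_sub, LinearMap.map_smul, hlam] at hTs
    have hinv : T (E j j) = (d : ℂ)⁻¹ • ((d : ℂ) • T (E j j)) := by
      rw [inv_smul_smul₀ hd0]
    have h2 : (d : ℂ) • T (E j j) = a • ((d : ℂ) • E j j - 1) + lam • 1 := by
      rw [← hTs]; abel
    rw [hinv, h2]
    match_scalars <;> (field_simp; try ring)
  -- conclude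
  refine ⟨a, (lam - a) / d, ?_⟩
  have hfin : T = a • (LinearMap.id : Mat d →ₗ[ℂ] Mat d)
      + LinearMap.smulRight (((lam - a) / d) • Matrix.traceLinearMap (Fin d) ℂ ℂ) 1 := by
    apply Module.Basis.ext (Matrix.stdBasis ℂ (Fin d) (Fin d))
    rintro ⟨p, q⟩
    rw [Matrix.stdBasis_eq_single]
    simp only [LinearMap.add_apply, LinearMap.smul_apply, LinearMap.id_apply,
      LinearMap.smulRight_apply, Matrix.traceLinearMap_apply]
    by_cases hpq : p = q
    · subst hpq
      have := hdiag p
      simp only [hE] at this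
      rw [this, trace_single_eq_same]
      rw [smul_eq_mul, mul_one]
    · have := hoff p q hpq
      simp only [hE] at this
      rw [this, trace_single_eq_of_ne _ _ _ hpq]
      rw [smul_eq_mul, mul_zero, zero_smul, add_zero]
      have hcpq : T (single p q 1) p q = a := by
        simpa only [hc, hE] using hcall p q hpq
      rw [hcpq]
  intro X
  rw [hfin]
  simp only [LinearMap.add_apply, LinearMap.smul_apply, LinearMap.id_apply,
    LinearMap.smulRight_apply, LinearMap.smul_apply, Matrix.traceLinearMap_apply,
    smul_eq_mul]

lemma trace_sq_real_pos {d : ℕ} (A : Mat d) (hA : Aᴴ = A) (hA0 : A ≠ 0) :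
    ∃ r : ℝ, 0 < r ∧ Matrix.trace (A * A) = (r : ℂ) := by
  classical
  refine ⟨∑ i, ∑ j, Complex.normSq (A j i), ?_, ?_⟩
  · obtain ⟨i0, j0, hij⟩ : ∃ i j, A i j ≠ 0 := by
      by_contra hcon
      push_neg at hcon
      exact hA0 (Matrix.ext fun i j => hcon i j)
    refine Finset.sum_pos' (fun i _ => Finset.sum_nonneg fun j _ => Complex.normSq_nonneg _) ?_
    exact ⟨j0, Finset.mem_univ _,
      Finset.sum_pos' (fun j _ => Complex.normSq_nonneg _)
        ⟨i0, Finset.mem_univ _, Complex.normSq_pos.mpr hij⟩⟩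
  · calc Matrix.trace (A * A) = Matrix.trace (Aᴴ * A) := by rw [hA]
      _ = ∑ i, ∑ j, star (A j i) * A j i := by
          simp [Matrix.trace, Matrix.diag, Matrix.mul_apply, Matrix.conjTranspose_apply]
      _ = ((∑ i, ∑ j, Complex.normSq (A j i) : ℝ) : ℂ) := by
          push_cast
          refine Finset.sum_congr rfl fun i _ => Finset.sum_congr rfl fun j _ => ?_
          rw [Complex.normSq_eq_conj_mul_self]
          rfl

/-- The "superoperator" sending `X` to `∑ l, tr(P l * X) • P l`. -/
def Sop (d : ℕ) (P : Fin (d ^ 2) → Mat d) : Mat d →ₗ[ℂ] Mat d where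
  toFun X := ∑ l, Matrix.trace (P l * X) • P l
  map_add' X Y := by
    simp only [Matrix.mul_add, Matrix.trace_add, add_smul, Finset.sum_add_distrib]
  map_smul' r X := by
    simp only [Matrix.mul_smul, Matrix.trace_smul, smul_eq_mul, RingHom.id_apply,
      Finset.smul_sum, smul_smul]

lemma Sop_apply (d : ℕ) (P : Fin (d ^ 2) → Mat d) (X : Mat d) :
    Sop d P X = ∑ l, Matrix.trace (P l * X) • P l := rfl


/-- If the structure constants of a minimal IC POVM, defined by
[Π_j, Π_k] = Σ_l C_{jkl} Π_l with C purely imaginary, are completely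
antisymmetric, then all Π_j have trace 1/d and {Π_j} is a generalized SIC. -/
theorem antisymmetric_structure_constants_genSIC (d : ℕ) (hd : 2 ≤ d)
    (P : Fin (d ^ 2) → Mat d)
    (hpsd : ∀ j, (P j).PosSemidef)
    (hsum : ∑ j, P j = 1)
    (hIC : ∀ A : Mat d, A.IsHermitian → A ∈ Submodule.span ℝ (Set.range P))
    (C : Fin (d ^ 2) → Fin (d ^ 2) → Fin (d ^ 2) → ℂ)
    (himag : ∀ j k l, (C j k l).re = 0)
    (hC : ∀ j k, P j * P k - P k * P j = ∑ l, C j k l • P l)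
    (hanti : ∀ j k l, C j k l = -C k j l ∧ C j k l = -C j l k ∧ C j k l = -C l k j) :
    (∀ j, Matrix.trace (P j) = (1 / (d : ℂ))) ∧
    (∃ α ζ : ℝ, 0 < α ∧ ∀ j k,
      Matrix.trace (((d : ℂ) • P j) * ((d : ℂ) • P k)) =
        if j = k then ((α : ℂ) + (ζ : ℂ)) else (ζ : ℂ)) := by
  classical
  have hherm : ∀ j, (P j)ᴴ = P j := fun j => (hpsd j).1
  have hdd : (d : ℂ) ≠ 0 := Nat.cast_ne_zero.mpr (by omega)
  -- ℂ-span of the range of P is everything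
  have hspan : (⊤ : Submodule ℂ (Mat d)) ≤ Submodule.span ℂ (Set.range P) := by
    intro A _
    have hsub : Submodule.span ℝ (Set.range P) ≤
        (Submodule.span ℂ (Set.range P)).restrictScalars ℝ :=
      Submodule.span_le.mpr Submodule.subset_span
    have hmem : ∀ B : Mat d, B.IsHermitian → B ∈ Submodule.span ℂ (Set.range P) :=
      fun B hB => hsub (hIC B hB)
    have hB1 : ((1/2 : ℂ) • (A + Aᴴ)).IsHermitian := by
      unfold Matrix.IsHermitian
      rw [Matrix.conjTranspose_smul, Matrix.conjTranspose_add,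
        Matrix.conjTranspose_conjTranspose]
      rw [show (star (1/2 : ℂ)) = (1/2 : ℂ) by simp, add_comm]
    have hB2 : ((Complex.I/2 : ℂ) • (Aᴴ - A)).IsHermitian := by
      unfold Matrix.IsHermitian
      rw [Matrix.conjTranspose_smul, Matrix.conjTranspose_sub,
        Matrix.conjTranspose_conjTranspose]
      have hs : star (Complex.I/2 : ℂ) = -(Complex.I/2) := by
        simp [div_eq_mul_inv]
      rw [hs, neg_smul, ← smul_neg, neg_sub]
    have hrec : A = (1/2 : ℂ) • (A + Aᴴ) + Complex.I • ((Complex.I/2 : ℂ) • (Aᴴ - A)) := by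
      rw [smul_smul]
      have hI : Complex.I * (Complex.I / 2) = -(1/2 : ℂ) := by
        rw [← mul_div_assoc, Complex.I_mul_I]
        norm_num
      rw [hI]
      module
    rw [hrec]
    exact Submodule.add_mem _ (hmem _ hB1) (Submodule.smul_mem _ _ (hmem _ hB2))
  -- linear independence of the P family over ℂ
  have hcard : Fintype.card (Fin (d ^ 2)) = Module.finrank ℂ (Mat d) := by
    rw [Fintype.card_fin, Module.finrank_matrix]
    simp [Module.finrank_self]
    ring
  have hli : LinearIndependent ℂ P :=
    linearIndependent_of_top_le_span_of_card_eq_finrank hspan hcard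
  -- the superoperator commutes with ad of each P j
  have hSP : ∀ (j : Fin (d ^ 2)) (X : Mat d),
      Sop d P (P j * X - X * P j) = P j * Sop d P X - Sop d P X * P j := by
    intro j X
    have hLtr : ∀ l, Matrix.trace (P l * (P j * X - X * P j))
        = ∑ m, C l j m * Matrix.trace (P m * X) := by
      intro l
      have e1 : Matrix.trace (P l * (P j * X - X * P j))
          = Matrix.trace ((P l * P j - P j * P l) * X) := by
        rw [Matrix.mul_sub, Matrix.sub_mul, Matrix.trace_sub, Matrix.trace_sub]
        congr 1
        · rw [Matrix.mul_assoc]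
        · rw [← Matrix.mul_assoc, Matrix.trace_mul_comm, Matrix.mul_assoc]
      rw [e1, hC l j, Finset.sum_mul]
      rw [Matrix.trace_sum]
      refine Finset.sum_congr rfl fun m _ => ?_
      rw [Matrix.smul_mul, Matrix.trace_smul, smul_eq_mul]
    have hR : P j * Sop d P X - Sop d P X * P j
        = ∑ l, ∑ m, (C j m l * Matrix.trace (P m * X)) • P l := by
      rw [Sop_apply, Finset.mul_sum, Finset.sum_mul, ← Finset.sum_sub_distrib]
      calc ∑ l, (P j * (Matrix.trace (P l * X) • P l)
              - (Matrix.trace (P l * X) • P l) * P j)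
          = ∑ l, Matrix.trace (P l * X) • (∑ m, C j l m • P m) := by
            refine Finset.sum_congr rfl fun l _ => ?_
            rw [mul_smul_comm, smul_mul_assoc, ← smul_sub, hC j l]
        _ = ∑ l, ∑ m, (C j l m * Matrix.trace (P l * X)) • P m := by
            refine Finset.sum_congr rfl fun l _ => ?_
            rw [Finset.smul_sum]
            refine Finset.sum_congr rfl fun m _ => ?_
            rw [smul_smul, mul_comm]
        _ = ∑ l, ∑ m, (C j m l * Matrix.trace (P m * X)) • P l := Finset.sum_comm
    rw [hR, Sop_apply]
    refine Finset.sum_congr rfl fun l _ => ?_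
    rw [hLtr l, Finset.sum_smul]
    refine Finset.sum_congr rfl fun m _ => ?_
    have hCid : C l j m = C j m l := by
      have h1 := (hanti l j m).1
      have h2 := (hanti j l m).2.1
      rw [h1, h2, neg_neg]
    rw [hCid]
  -- the superoperator commutes with all ad_A
  have hSA : ∀ A X : Mat d, Sop d P (A * X - X * A) = A * Sop d P X - Sop d P X * A := by
    intro A X
    have hmem : A ∈ Submodule.span ℂ (Set.range P) := hspan trivial
    induction hmem using Submodule.span_induction with
    | mem x hx =>
        obtain ⟨j, rfl⟩ := hx
        exact hSP j X
    | zero => simp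
    | add x y hx hy ihx ihy =>
        have e : (x + y) * X - X * (x + y) = (x * X - X * x) + (y * X - X * y) := by
          noncomm_ring
        rw [e, map_add, ihx, ihy]
        noncomm_ring
    | smul r x hx ihx =>
        have e : (r • x) * X - X * (r • x) = r • (x * X - X * x) := by
          rw [Matrix.smul_mul, Matrix.mul_smul, smul_sub]
        rw [e, LinearMap.map_smul, ihx, smul_sub, Matrix.smul_mul, Matrix.mul_smul]
  obtain ⟨a, b, hab⟩ := schur_ad_comm hd (Sop d P) hSA
  -- Gram matrix structure
  have hG : ∀ l k, Matrix.trace (P l * P k)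
      = (if l = k then a else 0) + b * Matrix.trace (P k) := by
    intro l k
    have h1 : (∑ m, Matrix.trace (P m * P k) • P m)
        = a • P k + (b * Matrix.trace (P k)) • (1 : Mat d) := hab (P k)
    have h2 : ∑ m, (Matrix.trace (P m * P k)
        - ((if m = k then a else 0) + b * Matrix.trace (P k))) • P m = 0 := by
      have hx : ∀ m, (Matrix.trace (P m * P k)
          - ((if m = k then a else 0) + b * Matrix.trace (P k))) • P m
          = Matrix.trace (P m * P k) • P m
            - ((if m = k then a • P m else (0 : Mat d)) + (b * Matrix.trace (P k)) • P m) := by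
        intro m
        rw [sub_smul, add_smul, ite_smul, zero_smul]
      rw [Finset.sum_congr rfl (fun m _ => hx m), Finset.sum_sub_distrib,
        Finset.sum_add_distrib, h1, Finset.sum_ite_eq' Finset.univ k (fun m => a • P m),
        ← hsum, Finset.smul_sum]
      simp
    have h3 := Fintype.linearIndependent_iff.mp hli _ h2 l
    exact sub_eq_zero.mp h3
  -- trace equation
  have hteq : ∀ k, Matrix.trace (P k)
      = a + (d ^ 2 : ℂ) * (b * Matrix.trace (P k)) := by
    intro k
    have h1 : Matrix.trace ((∑ l, P l) * P k) = Matrix.trace (P k) := by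
      rw [hsum, one_mul]
    rw [Finset.sum_mul, Matrix.trace_sum] at h1
    calc Matrix.trace (P k) = ∑ l, Matrix.trace (P l * P k) := h1.symm
      _ = ∑ l : Fin (d ^ 2), ((if l = k then a else 0) + b * Matrix.trace (P k)) :=
          Finset.sum_congr rfl fun l _ => hG l k
      _ = a + (d ^ 2 : ℂ) * (b * Matrix.trace (P k)) := by
          rw [Finset.sum_add_distrib, Finset.sum_const, Finset.card_univ, Fintype.card_fin,
            nsmul_eq_mul]
          simp [Finset.sum_ite_eq']
  -- two distinct indices
  have h0lt : 0 < d ^ 2 := by nlinarith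
  have h1lt : 1 < d ^ 2 := by nlinarith
  set j0 : Fin (d ^ 2) := ⟨0, h0lt⟩ with hj0def
  set j1 : Fin (d ^ 2) := ⟨1, h1lt⟩ with hj1def
  have hj01 : j0 ≠ j1 := by simp [hj0def, hj1def, Fin.ext_iff]
  have hPne : P j0 ≠ P j1 := fun hh => hj01 (hli.injective hh)
  have hA0 : P j0 - P j1 ≠ 0 := sub_ne_zero.mpr hPne
  obtain ⟨r, hr, hrtr⟩ := trace_sq_real_pos (P j0 - P j1)
    (by rw [Matrix.conjTranspose_sub, hherm j0, hherm j1]) hA0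
  have h2a : Matrix.trace ((P j0 - P j1) * (P j0 - P j1)) = 2 * a := by
    have e : (P j0 - P j1) * (P j0 - P j1)
        = P j0 * P j0 - P j0 * P j1 - (P j1 * P j0 - P j1 * P j1) := by noncomm_ring
    rw [e, Matrix.trace_sub, Matrix.trace_sub, Matrix.trace_sub, hG, hG, hG, hG]
    rw [if_pos rfl, if_pos rfl, if_neg hj01, if_neg (Ne.symm hj01)]
    ring
  have haval : (r : ℂ) = 2 * a := hrtr.symm.trans h2a
  have hane : a ≠ 0 := by
    intro h0
    rw [h0, mul_zero] at haval
    exact hr.ne' (by exact_mod_cast haval)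
  have hbne : (1 : ℂ) - (d ^ 2 : ℂ) * b ≠ 0 := by
    intro h0
    have h1 := hteq j0
    have h2 : a = Matrix.trace (P j0) * (1 - (d ^ 2 : ℂ) * b) := by
      linear_combination (-1 : ℂ) * h1
    rw [h0, mul_zero] at h2
    exact hane h2
  -- all traces are equal to 1/d
  have hconst : ∀ k, Matrix.trace (P k) = a / (1 - (d ^ 2 : ℂ) * b) := by
    intro k
    have h1 := hteq k
    rw [eq_div_iff hbne]
    linear_combination h1
  have hsumt : ∑ k, Matrix.trace (P k) = (d : ℂ) := by
    rw [← Matrix.trace_sum, hsum, Matrix.trace_one]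
    simp
  have htd : ∀ k, Matrix.trace (P k) = 1 / (d : ℂ) := by
    intro k
    have hall : (d : ℂ) ^ 2 * Matrix.trace (P k) = (d : ℂ) := by
      calc (d : ℂ) ^ 2 * Matrix.trace (P k)
          = ∑ k' : Fin (d ^ 2), Matrix.trace (P k) := by
            rw [Finset.sum_const, Finset.card_univ, Fintype.card_fin, nsmul_eq_mul]
            push_cast
            ring
        _ = ∑ k', Matrix.trace (P k') :=
            Finset.sum_congr rfl fun k' _ => ((hconst k').trans (hconst k).symm).symm
        _ = (d : ℂ) := hsumt
    have h5 : (d : ℂ) * ((d : ℂ) * Matrix.trace (P k)) = (d : ℂ) * 1 := by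
      rw [mul_one]
      linear_combination hall
    have h6 := mul_left_cancel₀ hdd h5
    rw [eq_div_iff hdd]
    linear_combination h6
  refine ⟨htd, ?_⟩
  -- realness of the off-diagonal Gram entry
  have hg01c : Matrix.trace (P j0 * P j1) = b * (1 / (d : ℂ)) := by
    rw [hG j0 j1, if_neg hj01, htd j1, zero_add]
  have hstar : (starRingEnd ℂ) (Matrix.trace (P j0 * P j1)) = Matrix.trace (P j0 * P j1) := by
    calc (starRingEnd ℂ) (Matrix.trace (P j0 * P j1))
        = Matrix.trace ((P j0 * P j1)ᴴ) := (Matrix.trace_conjTranspose _).symm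
      _ = Matrix.trace ((P j1)ᴴ * (P j0)ᴴ) := by rw [Matrix.conjTranspose_mul]
      _ = Matrix.trace (P j1 * P j0) := by rw [hherm j0, hherm j1]
      _ = Matrix.trace (P j0 * P j1) := Matrix.trace_mul_comm _ _
  have hg01re : Matrix.trace (P j0 * P j1)
      = (((Matrix.trace (P j0 * P j1)).re : ℝ) : ℂ) :=
    (Complex.conj_eq_iff_re.mp hstar).symm
  have haC : a = (((r / 2 : ℝ)) : ℂ) := by
    push_cast
    linear_combination (-1/2 : ℂ) * haval
  have hdR : (0 : ℝ) < (d : ℝ) := by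
    exact_mod_cast (by omega : 0 < d)
  refine ⟨(d : ℝ) ^ 2 * (r / 2), (d : ℝ) ^ 2 * (Matrix.trace (P j0 * P j1)).re,
    mul_pos (pow_pos hdR 2) (by linarith), ?_⟩
  intro j k
  have hmul : Matrix.trace (((d : ℂ) • P j) * ((d : ℂ) • P k))
      = (d : ℂ) ^ 2 * Matrix.trace (P j * P k) := by
    rw [Matrix.smul_mul, Matrix.mul_smul, Matrix.trace_smul, Matrix.trace_smul]
    simp only [smul_eq_mul]
    ring
  rw [hmul, hG j k, htd k]
  by_cases hjk : j = k
  · rw [if_pos hjk, if_pos hjk, ← hg01c, haC]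
    conv_lhs => rw [hg01re]
    push_cast
    ring
  · rw [if_neg hjk, if_neg hjk, zero_add, ← hg01c]
    conv_lhs => rw [hg01re]
    push_cast
    ring
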